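/- arXiv:1705.07277 — 3 statements merged into one kernel-verified Lean document; each statement's English description precedes it below -/
import Mathlib

section
/- Let β > 1. If w = w₁⋯wₙ is a full admissible word, then for every 1 ≤ k < n the suffix σ^k(w) = w_{k+1}⋯wₙ is also full. -/
noncomputable def Tb (β x : ℝ) : ℝ := β * x - ⌊β * x⌋

/-- The (i+1)-th digit of the β-expansion of x (0-indexed). -/
noncomputable def dig (β x : ℝ) (i : ℕ) : ℕ := (⌊β * (Tb β)^[i] x⌋).toNat

/-- w is an admissible word for base β. -/
def Adm (β : ℝ) (w : List ℕ) : Prop :=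
  ∃ x, x ∈ Set.Ico (0:ℝ) 1 ∧ ∀ i (h : i < w.length), w[i] = dig β x i

/-- u is an admissible digit sequence for base β. -/
def AdmSeq (β : ℝ) (u : ℕ → ℕ) : Prop :=
  ∃ x, x ∈ Set.Ico (0:ℝ) 1 ∧ ∀ i, u i = dig β x i

/-- The cylinder I(w) ⊆ [0,1). -/
def cyl (β : ℝ) (w : List ℕ) : Set ℝ :=
  {x | x ∈ Set.Ico (0:ℝ) 1 ∧ ∀ i (h : i < w.length), w[i] = dig β x i}

/-- w is a full word: T_β^{|w|} maps I(w) onto [0,1). -/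
def Full (β : ℝ) (w : List ℕ) : Prop :=
  (Tb β)^[w.length] '' cyl β w = Set.Ico 0 1

/-- The β-expansion of 1 is finite with length M. -/
def FiniteLen (β : ℝ) (M : ℕ) : Prop :=
  0 < M ∧ dig β 1 (M-1) ≠ 0 ∧ ∀ j, M ≤ j → dig β 1 j = 0

open Classical in
/-- The (i+1)-th digit of the modified β-expansion ε*(1,β) (0-indexed). -/
noncomputable def modExp (β : ℝ) (i : ℕ) : ℕ :=
  if h : ∃ M, FiniteLen β M then
    (if (i+1) % (Nat.find h) = 0 then dig β 1 (Nat.find h - 1) - 1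
     else dig β 1 (i % Nat.find h))
  else dig β 1 i

/-- View a finite word as the sequence w0^∞. -/
def wordSeq (w : List ℕ) (i : ℕ) : ℕ := w.getD i 0

/-- Strict lexicographic order on sequences. -/
def seqLt (u v : ℕ → ℕ) : Prop := ∃ k, (∀ i, i < k → u i = v i) ∧ u k < v k

/-- Strict lexicographic order on finite words (identified with w0^∞). -/
def wlt (u v : List ℕ) : Prop := seqLt (wordSeq u) (wordSeq v)

/-- Concatenation of a finite word with a sequence. -/
def catSeq (w : List ℕ) (u : ℕ → ℕ) (i : ℕ) : ℕ :=
  if h : i < w.length then w[i] else u (i - w.length)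

open Classical in
/-- The largest position k ≤ s with ε_k ≠ 0 (greedy step). -/
noncomputable def greedyStep (β : ℝ) (s : ℕ) : ℕ :=
  Nat.findGreatest (fun k => 1 ≤ k ∧ dig β 1 (k-1) ≠ 0) s

/-- τ_β(s): number of terms in the greedy representation of s by nonzero positions. -/
noncomputable def tau (β : ℝ) : ℕ → ℕ
  | 0 => 0
  | s + 1 => tau β (s - (greedyStep β (s+1) - 1)) + 1
decreasing_by omega

open Classical in
/-- r_s(β): maximal length of a string of 0's in ε₁*⋯ε_s*. -/
noncomputable def rrun (β : ℝ) (s : ℕ) : ℕ :=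
  Nat.findGreatest (fun k => 1 ≤ k ∧ ∃ i, i + k ≤ s ∧ ∀ t, t < k → modExp β (i + t) = 0) s

/-- v is the immediate successor of u in the lexicographic order on Σ_β^n. -/
def SuccIn (β : ℝ) (n : ℕ) (u v : List ℕ) : Prop :=
  u.length = n ∧ v.length = n ∧ Adm β u ∧ Adm β v ∧ wlt u v ∧
  ¬ ∃ z : List ℕ, z.length = n ∧ Adm β z ∧ wlt u z ∧ wlt z v

/-- There is a run of l consecutive non-full words in Σ_β^n. -/
def NonFullRun (β : ℝ) (n l : ℕ) : Prop :=
  ∃ f : ℕ → List ℕ,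
    (∀ j, j < l → (f j).length = n ∧ Adm β (f j) ∧ ¬ Full β (f j)) ∧
    (∀ j, j + 1 < l → SuccIn β n (f j) (f (j+1)))

/-- There is a maximal run of l consecutive non-full words in Σ_β^n. -/
def MaxNonFullRun (β : ℝ) (n l : ℕ) : Prop :=
  0 < l ∧ ∃ f : ℕ → List ℕ,
    (∀ j, j < l → (f j).length = n ∧ Adm β (f j) ∧ ¬ Full β (f j)) ∧
    (∀ j, j + 1 < l → SuccIn β n (f j) (f (j+1))) ∧
    (∀ u, SuccIn β n u (f 0) → Full β u) ∧
    (∀ u, SuccIn β n (f (l-1)) u → Full β u)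

/-- There is a maximal run of l consecutive full words in Σ_β^n. -/
def MaxFullRun (β : ℝ) (n l : ℕ) : Prop :=
  0 < l ∧ ∃ f : ℕ → List ℕ,
    (∀ j, j < l → (f j).length = n ∧ Adm β (f j) ∧ Full β (f j)) ∧
    (∀ j, j + 1 < l → SuccIn β n (f j) (f (j+1))) ∧
    (∀ u, SuccIn β n u (f 0) → ¬ Full β u) ∧
    (∀ u, SuccIn β n (f (l-1)) u → ¬ Full β u)

/-- The canonical decomposition of an admissible word, as in the structure theorem:
p.1 is the list of block lengths k₁,…,k_p and p.2 is the final length l. -/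
def Decomp (β : ℝ) (w : List ℕ) (p : List ℕ × ℕ) : Prop :=
  1 ≤ p.2 ∧ (∀ k ∈ p.1, 1 ≤ k) ∧ p.1.sum + p.2 = w.length ∧
  (∀ j, j < p.1.length →
    (∀ t, t < p.1.getD j 0 - 1 → w.getD ((p.1.take j).sum + t) 0 = dig β 1 t) ∧
    w.getD ((p.1.take j).sum + (p.1.getD j 0 - 1)) 0 < dig β 1 (p.1.getD j 0 - 1)) ∧
  (∀ t, t < p.2 - 1 → w.getD (p.1.sum + t) 0 = dig β 1 t) ∧
  w.getD (p.1.sum + (p.2 - 1)) 0 ≤ dig β 1 (p.2 - 1)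

lemma Tb_mem_Ico (β x : ℝ) : Tb β x ∈ Set.Ico (0:ℝ) 1 := by
  have h : Tb β x = Int.fract (β * x) := rfl
  rw [h]
  exact ⟨Int.fract_nonneg _, Int.fract_lt_one _⟩

lemma Tb_iter_mem_Ico (β x : ℝ) (m : ℕ) (hm : 1 ≤ m) :
    (Tb β)^[m] x ∈ Set.Ico (0:ℝ) 1 := by
  obtain ⟨j, rfl⟩ := Nat.exists_eq_add_of_le hm
  rw [Nat.add_comm, Function.iterate_succ_apply']
  exact Tb_mem_Ico β _

lemma dig_iter (β x : ℝ) (k i : ℕ) : dig β ((Tb β)^[k] x) i = dig β x (i + k) := by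
  unfold dig
  rw [Function.iterate_add_apply]

/-- any proper suffix of a full word is full. -/
theorem stmt3 (β : ℝ) (hβ : 1 < β) (w : List ℕ) (h : Adm β w) (hf : Full β w)
    (k : ℕ) (hk1 : 1 ≤ k) (hk2 : k < w.length) :
    Full β (w.drop k) := by
  unfold Full at hf ⊢
  have hlen : (w.drop k).length = w.length - k := by simp
  rw [hlen]
  apply Set.Subset.antisymm
  · rintro y ⟨x, hx, rfl⟩
    exact Tb_iter_mem_Ico β x _ (by omega)
  · intro y hy
    rw [← hf] at hy
    obtain ⟨x, hx, hxy⟩ := hy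
    refine ⟨(Tb β)^[k] x, ⟨Tb_iter_mem_Ico β x k hk1, ?_⟩, ?_⟩
    · intro i hi
      rw [hlen] at hi
      have h1 : (w.drop k)[i] = w[k + i] := by
        rw [List.getElem_drop]
      rw [h1, dig_iter]
      have := hx.2 (k + i) (by omega)
      rw [this, Nat.add_comm]
    · rw [← Function.iterate_add_apply]
      rw [Nat.sub_add_cancel (le_of_lt hk2)]
      exact hxy
end

section
/- Let β > 1 and k ∈ ℕ. The prefix ε*(1,β)|_k of the modified β-expansion of 1 is full if and only if ε(1,β) is finite with length M and M divides k. -/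
section Aux

variable {β : ℝ}

lemma Tb_mem (x : ℝ) : Tb β x ∈ Set.Ico (0:ℝ) 1 := by
  have h : Tb β x = Int.fract (β * x) := rfl
  rw [h]
  exact ⟨Int.fract_nonneg _, Int.fract_lt_one _⟩

lemma Tb_iter_mem' (x : ℝ) {n : ℕ} (hn : 1 ≤ n) : (Tb β)^[n] x ∈ Set.Ico (0:ℝ) 1 := by
  obtain ⟨m, rfl⟩ := Nat.exists_eq_add_of_le hn
  rw [add_comm, Function.iterate_succ_apply']
  exact Tb_mem _

lemma Tb_iter_nonneg {x : ℝ} (hx : 0 ≤ x) (n : ℕ) : 0 ≤ (Tb β)^[n] x := by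
  cases n with
  | zero => simpa
  | succ n => exact (Tb_iter_mem' x (Nat.succ_le_succ (Nat.zero_le n))).1

lemma dig_cast (hβ : 0 < β) {x : ℝ} (hx : 0 ≤ x) (i : ℕ) :
    ((dig β x i : ℕ) : ℝ) = ((⌊β * (Tb β)^[i] x⌋ : ℤ) : ℝ) := by
  have h0 : (0:ℤ) ≤ ⌊β * (Tb β)^[i] x⌋ :=
    Int.floor_nonneg.mpr (mul_nonneg hβ.le (Tb_iter_nonneg hx i))
  unfold dig
  exact_mod_cast congrArg (fun z : ℤ => (z : ℝ)) (Int.toNat_of_nonneg h0)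

lemma dig_real (hβ : 0 < β) {x : ℝ} (hx : 0 ≤ x) (i : ℕ) :
    ((dig β x i : ℕ) : ℝ) = β * (Tb β)^[i] x - (Tb β)^[i+1] x := by
  rw [dig_cast hβ hx i, Function.iterate_succ_apply']
  unfold Tb
  ring

lemma Tb_iter_formula (hβ : 0 < β) {x : ℝ} (hx : 0 ≤ x) (n : ℕ) :
    (Tb β)^[n] x = β ^ n * (x - ∑ i ∈ Finset.range n, (dig β x i : ℝ) * (β⁻¹) ^ (i+1)) := by
  have hbne : β ≠ 0 := ne_of_gt hβ
  induction n with
  | zero => simp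
  | succ n ih =>
    have hd := dig_real hβ hx n
    have h1 : β ^ (n+1) * (β⁻¹) ^ (n+1) = 1 := by
      rw [← mul_pow, mul_inv_cancel₀ hbne, one_pow]
    rw [Finset.sum_range_succ]
    have : (Tb β)^[n+1] x = β * (Tb β)^[n] x - (dig β x n : ℝ) := by
      rw [hd]; ring
    rw [this, ih]
    linear_combination (dig β x n : ℝ) * h1

/-- value of a word prefix -/
noncomputable def Sw (β : ℝ) (w : List ℕ) (m : ℕ) : ℝ :=
  ∑ i ∈ Finset.range m, (w.getD i 0 : ℝ) * (β⁻¹) ^ (i+1)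

lemma cyl_iter (hβ : 0 < β) {w : List ℕ} {x : ℝ} (hx : x ∈ cyl β w)
    {m : ℕ} (hm : m ≤ w.length) :
    (Tb β)^[m] x = β ^ m * (x - Sw β w m) := by
  have hs : Sw β w m = ∑ i ∈ Finset.range m, (dig β x i : ℝ) * (β⁻¹) ^ (i+1) := by
    refine Finset.sum_congr rfl fun i hi => ?_
    have hil : i < w.length := lt_of_lt_of_le (Finset.mem_range.mp hi) hm
    rw [List.getD_eq_getElem w 0 hil, hx.2 i hil]
  rw [hs, ← Tb_iter_formula hβ hx.1.1 m]

lemma mem_cyl_of (hβ : 0 < β) {w : List ℕ} {x : ℝ}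
    (hx : x ∈ Set.Ico (0:ℝ) 1)
    (hall : ∀ m, m ≤ w.length → β ^ m * (x - Sw β w m) ∈ Set.Ico (0:ℝ) 1) :
    x ∈ cyl β w := by
  have hbne : β ≠ 0 := ne_of_gt hβ
  refine ⟨hx, ?_⟩
  intro i hi
  induction i using Nat.strong_induction_on with
  | _ i ih =>
    have hform : (Tb β)^[i] x = β ^ i * (x - Sw β w i) := by
      rw [Tb_iter_formula hβ hx.1 i]
      congr 2
      refine (Finset.sum_congr rfl fun j hj => ?_).symm
      have hjl : j < w.length := lt_trans (Finset.mem_range.mp hj) hi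
      rw [List.getD_eq_getElem w 0 hjl, ih j (Finset.mem_range.mp hj) hjl]
    have hkey : β * (Tb β)^[i] x - (w[i] : ℝ) = β ^ (i+1) * (x - Sw β w (i+1)) := by
      have h1 : β ^ (i+1) * (β⁻¹) ^ (i+1) = 1 := by
        rw [← mul_pow, mul_inv_cancel₀ hbne, one_pow]
      have hS : Sw β w (i+1) = Sw β w i + (w[i] : ℝ) * (β⁻¹) ^ (i+1) := by
        unfold Sw
        rw [Finset.sum_range_succ, List.getD_eq_getElem w 0 hi]
      rw [hS, hform]
      linear_combination (w[i] : ℝ) * h1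
    have hmem := hall (i+1) hi
    have hfl : ⌊β * (Tb β)^[i] x⌋ = ((w[i] : ℕ) : ℤ) := by
      rw [Int.floor_eq_iff]
      constructor
      · push_cast; nlinarith [hmem.1, hkey]
      · push_cast; nlinarith [hmem.2, hkey]
    unfold dig
    rw [hfl]
    simp

lemma not_full_of_lt (hβ : 0 < β) {w : List ℕ} {k : ℕ} (hk : 1 ≤ k)
    (hwlen : w.length = k) {c : ℝ}
    (hc : Sw β w k = 1 - (β⁻¹) ^ k * c) (hclt : c < 1) : ¬ Full β w := by
  intro hfull
  have h1 : β ^ k * (β⁻¹) ^ k = 1 := by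
    rw [← mul_pow, mul_inv_cancel₀ (ne_of_gt hβ), one_pow]
  have hy : max c 0 ∈ Set.Ico (0:ℝ) 1 := ⟨le_max_right _ _, max_lt hclt one_pos⟩
  rw [Full, hwlen] at hfull
  rw [← hfull] at hy
  obtain ⟨x, hx, hTx⟩ := hy
  have hiter : (Tb β)^[k] x = β ^ k * (x - Sw β w k) := cyl_iter hβ hx hwlen.ge
  have hlt : (Tb β)^[k] x < c := by
    rw [hiter, hc]
    have hx1 : x < 1 := hx.1.2
    nlinarith [pow_pos hβ k]
  have hge : c ≤ (Tb β)^[k] x := by rw [hTx]; exact le_max_left _ _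
  linarith

lemma finiteLen_unique {M N : ℕ} (hM : FiniteLen β M) (hN : FiniteLen β N) : M = N := by
  by_contra hne
  rcases Nat.lt_or_ge M N with h | h
  · exact hN.2.1 (hM.2.2 (N-1) (by omega))
  · exact hM.2.1 (hN.2.2 (M-1) (by omega))

lemma TM_zero (hβ : 1 < β) {M : ℕ} (hM : FiniteLen β M) : (Tb β)^[M] 1 = 0 := by
  have hβ0 : (0:ℝ) < β := lt_trans one_pos hβ
  have haux : ∀ t, (Tb β)^[M + t] 1 = β ^ t * (Tb β)^[M] 1 := by
    intro t
    induction t with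
    | zero => simp
    | succ t ih =>
      have hdig : dig β 1 (M + t) = 0 := hM.2.2 _ (Nat.le_add_right _ _)
      have hd := dig_real hβ0 (zero_le_one (α := ℝ)) (M + t)
      rw [hdig] at hd
      have h2 : (Tb β)^[M + (t+1)] 1 = β * (Tb β)^[M + t] 1 := by
        have : M + (t+1) = (M + t) + 1 := by omega
        rw [this]
        push_cast at hd
        linarith
      rw [h2, ih, pow_succ]; ring
  have hnn : 0 ≤ (Tb β)^[M] 1 := Tb_iter_nonneg zero_le_one M
  rcases lt_or_eq_of_le hnn with hpos | h0
  · exfalso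
    obtain ⟨t, ht⟩ := pow_unbounded_of_one_lt (1 / (Tb β)^[M] 1) hβ
    have hlt : β ^ t * (Tb β)^[M] 1 < 1 := by
      rw [← haux t]
      exact (Tb_iter_mem' 1 (by have := hM.1; omega : 1 ≤ M + t)).2
    rw [div_lt_iff₀ hpos] at ht
    nlinarith
  · exact h0.symm

lemma Tb_iter_le (hβ : 1 < β) (s : ℕ) : ∀ u, (Tb β)^[s + u] 1 ≤ β ^ u * (Tb β)^[s] 1 := by
  have hβ0 : (0:ℝ) < β := lt_trans one_pos hβ
  intro u
  induction u with
  | zero => simp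
  | succ u ih =>
    have hd := dig_real hβ0 (zero_le_one (α := ℝ)) (s + u)
    have hdn : (0:ℝ) ≤ (dig β 1 (s+u) : ℝ) := Nat.cast_nonneg _
    have h2 : (Tb β)^[s + (u+1)] 1 ≤ β * (Tb β)^[s + u] 1 := by
      have he : s + (u+1) = (s + u) + 1 := by omega
      rw [he]; linarith
    calc (Tb β)^[s + (u+1)] 1 ≤ β * (Tb β)^[s + u] 1 := h2
      _ ≤ β * (β ^ u * (Tb β)^[s] 1) := by nlinarith
      _ = β ^ (u+1) * (Tb β)^[s] 1 := by rw [pow_succ]; ring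

lemma Tlow (hβ : 1 < β) {M : ℕ} (hM : FiniteLen β M) {t : ℕ} (ht : t < M) :
    1 ≤ β ^ (M - t) * (Tb β)^[t] 1 := by
  have hβ0 : (0:ℝ) < β := lt_trans one_pos hβ
  have hd1 : (1:ℝ) ≤ (dig β 1 (M-1) : ℝ) := by
    exact_mod_cast Nat.one_le_iff_ne_zero.mpr hM.2.1
  have hfloor : (dig β 1 (M-1) : ℝ) ≤ β * (Tb β)^[M-1] 1 := by
    rw [dig_cast hβ0 (zero_le_one (α := ℝ))]
    exact Int.floor_le _
  have hmain : (Tb β)^[M-1] 1 ≤ β ^ (M-1-t) * (Tb β)^[t] 1 := by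
    have := Tb_iter_le hβ t (M-1-t)
    rwa [show t + (M-1-t) = M - 1 by omega] at this
  have hpow : β ^ (M - t) = β * β ^ (M-1-t) := by
    rw [← pow_succ']
    congr 1
    omega
  rw [hpow]
  nlinarith

/-- value of the prefix of ε* -/
noncomputable def Bm (β : ℝ) (m : ℕ) : ℝ :=
  ∑ i ∈ Finset.range m, (modExp β i : ℝ) * (β⁻¹) ^ (i+1)

open Classical in
lemma modExp_eq (h : ∃ M, FiniteLen β M) {M : ℕ} (hM : FiniteLen β M) (i : ℕ) :
    modExp β i = if (i+1) % M = 0 then dig β 1 (M-1) - 1 else dig β 1 (i % M) := by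
  have hfind : Nat.find h = M := finiteLen_unique (Nat.find_spec h) hM
  rw [modExp, dif_pos h, hfind]

lemma modExp_eq_inf (h : ¬ ∃ M, FiniteLen β M) (i : ℕ) : modExp β i = dig β 1 i := by
  rw [modExp, dif_neg h]

lemma mod_succ_cases {M m : ℕ} (hM : 0 < M) :
    ((m+1) % M = 0 ∧ m % M = M - 1) ∨ ((m+1) % M = m % M + 1) := by
  have h1 : m % M < M := Nat.mod_lt _ hM
  have h2 : (m+1) % M = (m % M + 1) % M := by
    conv_lhs => rw [← Nat.mod_add_div m M]
    rw [show m % M + M * (m / M) + 1 = (m % M + 1) + M * (m / M) by ring,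
      Nat.add_mul_mod_self_left]
  rcases Nat.lt_or_ge (m % M + 1) M with hlt | hge
  · right; rw [h2, Nat.mod_eq_of_lt hlt]
  · left
    have heq : m % M + 1 = M := by omega
    constructor
    · rw [h2, heq, Nat.mod_self]
    · omega

lemma Bm_formula (hβ : 1 < β) (h : ∃ M, FiniteLen β M) {M : ℕ} (hM : FiniteLen β M)
    (m : ℕ) : Bm β m = 1 - (β⁻¹) ^ m * (Tb β)^[m % M] 1 := by
  have hβ0 : (0:ℝ) < β := lt_trans one_pos hβ
  have hbne : β ≠ 0 := ne_of_gt hβ0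
  induction m with
  | zero => simp [Bm]
  | succ m ih =>
    have hstep : Bm β (m+1) = Bm β m + (modExp β m : ℝ) * (β⁻¹) ^ (m+1) := by
      unfold Bm; rw [Finset.sum_range_succ]
    have hinv : β * β⁻¹ = 1 := mul_inv_cancel₀ hbne
    rcases mod_succ_cases (M := M) (m := m) hM.1 with ⟨hz, hm1⟩ | hsucc
    · rw [modExp_eq h hM m, if_pos hz] at hstep
      have hcast : ((dig β 1 (M-1) - 1 : ℕ) : ℝ) = (dig β 1 (M-1) : ℝ) - 1 := by
        have : 1 ≤ dig β 1 (M-1) := Nat.one_le_iff_ne_zero.mpr hM.2.1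
        push_cast [this]; ring
      have hdr := dig_real hβ0 (zero_le_one (α := ℝ)) (M-1)
      have hMm : M - 1 + 1 = M := by have := hM.1; omega
      rw [hMm, TM_zero hβ hM] at hdr
      rw [hstep, hcast, hdr, ih, hm1, hz]
      simp only [Function.iterate_zero_apply]
      have hps : (β⁻¹ : ℝ) ^ (m+1) = β⁻¹ ^ m * β⁻¹ := pow_succ _ _
      rw [hps]
      linear_combination (β⁻¹ ^ m * (Tb β)^[M-1] 1) * hinv
    · rw [modExp_eq h hM m, if_neg (by rw [hsucc]; exact Nat.succ_ne_zero _)] at hstep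
      have hdr := dig_real hβ0 (zero_le_one (α := ℝ)) (m % M)
      rw [hstep, hdr, ih, hsucc]
      have hps : (β⁻¹ : ℝ) ^ (m+1) = β⁻¹ ^ m * β⁻¹ := pow_succ _ _
      rw [hps]
      linear_combination (β⁻¹ ^ m * (Tb β)^[m % M] 1) * hinv

lemma Sw_word {k m : ℕ} (hm : m ≤ k) :
    Sw β (List.ofFn (fun i : Fin k => modExp β i)) m = Bm β m := by
  unfold Sw Bm
  refine Finset.sum_congr rfl fun i hi => ?_
  have hik : i < k := lt_of_lt_of_le (Finset.mem_range.mp hi) hm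
  have hlen : i < (List.ofFn (fun i : Fin k => modExp β i)).length := by
    rw [List.length_ofFn]; exact hik
  rw [List.getD_eq_getElem _ 0 hlen, List.getElem_ofFn]

lemma Sw_word_inf (h : ¬ ∃ M, FiniteLen β M) (hβ : 1 < β) {k m : ℕ} (hm : m ≤ k) :
    Sw β (List.ofFn (fun i : Fin k => modExp β i)) m
      = 1 - (β⁻¹) ^ m * (Tb β)^[m] 1 := by
  have hβ0 : (0:ℝ) < β := lt_trans one_pos hβ
  have hbne : β ≠ 0 := ne_of_gt hβ0
  have h1 : β ^ m * (β⁻¹) ^ m = 1 := by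
    rw [← mul_pow, mul_inv_cancel₀ hbne, one_pow]
  have hS : Sw β (List.ofFn (fun i : Fin k => modExp β i)) m
      = ∑ i ∈ Finset.range m, (dig β 1 i : ℝ) * (β⁻¹) ^ (i+1) := by
    unfold Sw
    refine Finset.sum_congr rfl fun i hi => ?_
    have hik : i < k := lt_of_lt_of_le (Finset.mem_range.mp hi) hm
    have hlen : i < (List.ofFn (fun i : Fin k => modExp β i)).length := by
      rw [List.length_ofFn]; exact hik
    rw [List.getD_eq_getElem _ 0 hlen, List.getElem_ofFn, modExp_eq_inf h]
  have hiter := Tb_iter_formula hβ0 (zero_le_one (α := ℝ)) m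
  rw [hS]
  set S := ∑ i ∈ Finset.range m, (dig β 1 i : ℝ) * (β⁻¹) ^ (i+1) with hSdef
  rw [hiter]
  linear_combination (1 - S) * h1

lemma full_of_dvd (hβ : 1 < β) (h : ∃ M, FiniteLen β M) {M : ℕ} (hM : FiniteLen β M)
    {k : ℕ} (hk : 1 ≤ k) (hd : M ∣ k) :
    Full β (List.ofFn fun i : Fin k => modExp β i) := by
  have hβ0 : (0:ℝ) < β := lt_trans one_pos hβ
  have hbne : β ≠ 0 := ne_of_gt hβ0
  have hinv0 : (0:ℝ) < β⁻¹ := inv_pos.mpr hβ0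
  have hinv1 : (β⁻¹:ℝ) ≤ 1 := by nlinarith [mul_inv_cancel₀ hbne]
  set w : List ℕ := List.ofFn fun i : Fin k => modExp β i with hw
  have hlen : w.length = k := by rw [hw, List.length_ofFn]
  have hk0 : k % M = 0 := Nat.eq_zero_of_dvd_of_lt hd |> fun _ => Nat.mod_eq_zero_of_dvd hd
  unfold Full
  rw [hlen]
  apply Set.Subset.antisymm
  · rintro y ⟨x, hx, rfl⟩
    exact Tb_iter_mem' x hk
  · intro y hy
    have hy0 : (0:ℝ) ≤ y := hy.1
    have hy1 : y < 1 := hy.2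
    have h1 : β ^ k * (β⁻¹) ^ k = 1 := by
      rw [← mul_pow, mul_inv_cancel₀ hbne, one_pow]
    have hik0 : (0:ℝ) < (β⁻¹) ^ k := pow_pos hinv0 k
    have hik1 : (β⁻¹:ℝ) ^ k ≤ 1 := pow_le_one₀ hinv0.le hinv1
    set x := 1 - (β⁻¹) ^ k * (1 - y) with hxdef
    have hx : x ∈ Set.Ico (0:ℝ) 1 := by
      constructor
      · rw [hxdef]; nlinarith
      · rw [hxdef]; nlinarith
    have hall : ∀ m, m ≤ w.length → β ^ m * (x - Sw β w m) ∈ Set.Ico (0:ℝ) 1 := by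
      intro m hm
      rw [hlen] at hm
      have hmk : m ≤ k := hm
      have h1m : β ^ m * (β⁻¹) ^ m = 1 := by
        rw [← mul_pow, mul_inv_cancel₀ hbne, one_pow]
      have hsplit : (β⁻¹:ℝ) ^ k = (β⁻¹) ^ m * (β⁻¹) ^ (k - m) := by
        rw [← pow_add]; congr 1; omega
      have hV : β ^ m * (x - Sw β w m)
          = (Tb β)^[m % M] 1 - (β⁻¹) ^ (k - m) * (1 - y) := by
        rw [hw, Sw_word hmk, Bm_formula hβ h hM m, hxdef, hsplit]
        linear_combination ((Tb β)^[m % M] 1 - (β⁻¹) ^ (k - m) * (1 - y)) * h1m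
      rw [hV]
      rcases Nat.lt_or_ge m k with hmlt | hge
      · -- m < k
        set t := m % M with htdef
        have ht : t < M := Nat.mod_lt _ hM.1
        have hkm : M - t ≤ k - m := by
          have e1 : M * (m / M) + m % M = m := Nat.div_add_mod m M
          have hk2 : M * (k / M) = k := Nat.mul_div_cancel' hd
          have hql : m / M < k / M := by
            apply Nat.lt_of_mul_lt_mul_left (a := M)
            omega
          have e2 : M * (m / M + 1) ≤ M * (k / M) := Nat.mul_le_mul_left M hql
          have e3 : M * (m / M + 1) = M * (m / M) + M := by ring
          omega
        have hikm0 : (0:ℝ) < (β⁻¹) ^ (k - m) := pow_pos hinv0 _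
        have hT : (β⁻¹:ℝ) ^ (M - t) ≤ (Tb β)^[t] 1 := by
          have h2 := Tlow hβ hM ht
          have hp : (0:ℝ) < β ^ (M - t) := pow_pos hβ0 _
          calc (β⁻¹:ℝ) ^ (M - t) = (β ^ (M-t))⁻¹ * 1 := by rw [inv_pow]; ring
            _ ≤ (β ^ (M-t))⁻¹ * (β ^ (M-t) * (Tb β)^[t] 1) :=
                mul_le_mul_of_nonneg_left h2 (by positivity)
            _ = (Tb β)^[t] 1 := by field_simp
        have hmono : (β⁻¹:ℝ) ^ (k - m) ≤ (β⁻¹) ^ (M - t) :=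
          pow_le_pow_of_le_one hinv0.le hinv1 hkm
        have hA : (β⁻¹:ℝ) ^ (k - m) * (1 - y) ≤ (β⁻¹) ^ (k - m) :=
          mul_le_of_le_one_right hikm0.le (by linarith)
        constructor
        · linarith
        · rcases Nat.eq_zero_or_pos t with ht0 | ht1
          · rw [ht0]
            simp only [Function.iterate_zero_apply]
            nlinarith
          · have := (Tb_iter_mem' (β := β) 1 ht1).2
            nlinarith
      · -- m = k
        have hmk' : m = k := le_antisymm hmk hge
        rw [hmk', hk0]
        simp only [Function.iterate_zero_apply, Nat.sub_self, pow_zero, one_mul]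
        constructor <;> [linarith; linarith]
    have hcyl : x ∈ cyl β w := mem_cyl_of hβ0 hx hall
    refine ⟨x, hcyl, ?_⟩
    rw [cyl_iter hβ0 hcyl hlen.ge, hw, Sw_word (le_refl k), Bm_formula hβ h hM k, hk0]
    simp only [Function.iterate_zero_apply]
    rw [hxdef]
    linear_combination y * h1

end Aux

/-- ε*(1,β)|_k is full iff ε(1,β) is finite with length M and M ∣ k. -/
theorem stmt7 (β : ℝ) (hβ : 1 < β) (k : ℕ) (hk : 1 ≤ k) :
    Full β (List.ofFn (fun i : Fin k => modExp β i)) ↔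
      ∃ M, FiniteLen β M ∧ M ∣ k := by
  have hβ0 : (0:ℝ) < β := lt_trans one_pos hβ
  have hlen : (List.ofFn (fun i : Fin k => modExp β i)).length = k := by
    rw [List.length_ofFn]
  by_cases h : ∃ M, FiniteLen β M
  · obtain ⟨M, hM⟩ := id h
    by_cases hd : M ∣ k
    · exact iff_of_true (full_of_dvd hβ h hM hk hd) ⟨M, hM, hd⟩
    · apply iff_of_false
      · refine not_full_of_lt hβ0 hk hlen (c := (Tb β)^[k % M] 1) ?_ ?_
        · rw [Sw_word (le_refl k), Bm_formula hβ h hM k]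
        · have hkM : 1 ≤ k % M := by
            rcases Nat.eq_zero_or_pos (k % M) with h0 | h1
            · exact absurd (Nat.dvd_of_mod_eq_zero h0) hd
            · exact h1
          exact (Tb_iter_mem' 1 hkM).2
      · rintro ⟨M', hM', hdvd⟩
        exact hd ((finiteLen_unique hM hM') ▸ hdvd)
  · apply iff_of_false
    · refine not_full_of_lt hβ0 hk hlen (c := (Tb β)^[k] 1) ?_ ?_
      · exact Sw_word_inf h hβ (le_refl k)
      · exact (Tb_iter_mem' 1 hk).2
    · rintro ⟨M, hM, _⟩
      exact h ⟨M, hM⟩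
end

section
/- Let β > 1, w ∈ Σ_β^n, and write w = u ε₁⋯ε_{l−1}wₙ in its canonical decomposition (with suffix w* = ε₁⋯ε_{l−1}wₙ where wₙ ≤ ε_l as in the structure theorem). Then w is full if and only if w* is full, which holds if and only if wₙ < ε_l. -/
lemma tb_fract (β x : ℝ) : Tb β x = Int.fract (β * x) := rfl

lemma tb_nonneg (β x : ℝ) : 0 ≤ Tb β x := by
  rw [tb_fract]; exact Int.fract_nonneg _

lemma tb_lt_one (β x : ℝ) : Tb β x < 1 := by
  rw [tb_fract]; exact Int.fract_lt_one _

lemma iter_nonneg (β x : ℝ) (hx : 0 ≤ x) (i : ℕ) : 0 ≤ (Tb β)^[i] x := by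
  cases i with
  | zero => simpa
  | succ n => rw [Function.iterate_succ_apply']; exact tb_nonneg β _

lemma iter_lt_one (β x : ℝ) (hx : x < 1) (i : ℕ) : (Tb β)^[i] x < 1 := by
  cases i with
  | zero => simpa
  | succ n => rw [Function.iterate_succ_apply']; exact tb_lt_one β _

lemma dig_shift (β x : ℝ) (k i : ℕ) : dig β x (k + i) = dig β ((Tb β)^[k] x) i := by
  simp [dig, ← Function.iterate_add_apply, Nat.add_comm i k]

lemma floor_eq_dig (β x : ℝ) (hβ : 0 < β) (hx : 0 ≤ x) (i : ℕ) :
    ⌊β * (Tb β)^[i] x⌋ = (dig β x i : ℤ) := by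
  rw [dig, Int.toNat_of_nonneg]
  exact Int.floor_nonneg.2 (mul_nonneg hβ.le (iter_nonneg β x hx i))

lemma tb_eq (β x : ℝ) (hβ : 0 < β) (hx : 0 ≤ x) (i : ℕ) :
    (Tb β)^[i + 1] x = β * (Tb β)^[i] x - dig β x i := by
  rw [Function.iterate_succ_apply', Tb, floor_eq_dig β x hβ hx i]
  push_cast; ring

lemma lt_iter (β : ℝ) (hβ : 0 < β) (l : ℕ) : ∀ x z : ℝ, 0 ≤ x → 0 ≤ z → x < z →
    (∀ i, i < l → dig β x i = dig β z i) → (Tb β)^[l] x < (Tb β)^[l] z := by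
  induction l with
  | zero => intro x z _ _ h _; simpa
  | succ n ih =>
    intro x z hx hz hxz hd
    rw [tb_eq β x hβ hx n, tb_eq β z hβ hz n, hd n (Nat.lt_succ_self n)]
    have := ih x z hx hz hxz (fun i hi => hd i (hi.trans (Nat.lt_succ_self n)))
    nlinarith

lemma dig0_floor (β x : ℝ) : dig β x 0 = (⌊β * x⌋).toNat := by simp [dig]


lemma exists_pre (β : ℝ) (hβ : 1 < β) :
    ∀ (l : ℕ) (z : ℝ), 0 ≤ z → z ≤ 1 → ∀ (a : ℕ) (y : ℝ), a < dig β z l → 0 ≤ y → y < 1 →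
    ∃ x : ℝ, 0 ≤ x ∧ x < z ∧ (∀ i, i < l → dig β x i = dig β z i) ∧
      dig β x l = a ∧ (Tb β)^[l + 1] x = y := by
  have hβ0 : (0:ℝ) < β := lt_trans one_pos hβ
  intro l
  induction l with
  | zero =>
    intro z hz0 hz1 a y ha hy0 hy1
    have hfz : ⌊β * z⌋ = (dig β z 0 : ℤ) := floor_eq_dig β z hβ0 hz0 0
    have h1 : ((a : ℤ) + 1) ≤ ⌊β * z⌋ := by rw [hfz]; exact_mod_cast ha
    have h1R : (a : ℝ) + 1 ≤ β * z := by
      have := Int.floor_le (β * z)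
      have h2 : ((a : ℤ) + 1 : ℝ) ≤ (⌊β * z⌋ : ℝ) := by exact_mod_cast h1
      push_cast at h2 ⊢; linarith
    have hmul : β * (((a : ℝ) + y) / β) = (a : ℝ) + y := mul_div_cancel₀ _ (ne_of_gt hβ0)
    have hfloor : ⌊β * (((a : ℝ) + y) / β)⌋ = (a : ℤ) := by
      rw [hmul, Int.floor_eq_iff]
      constructor <;> push_cast <;> linarith
    refine ⟨((a : ℝ) + y) / β, by positivity, ?_, by omega, ?_, ?_⟩
    · rw [div_lt_iff₀ hβ0]; nlinarith
    · rw [dig0_floor, hfloor]; simp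
    · rw [Function.iterate_one, Tb, hfloor, hmul]; push_cast; ring
  | succ n ih =>
    intro z hz0 hz1 a y ha hy0 hy1
    set z' := Tb β z with hz'
    have hz'0 : 0 ≤ z' := tb_nonneg β z
    have hz'1 : z' < 1 := tb_lt_one β z
    have ha' : a < dig β z' n := by
      have h := dig_shift β z 1 n
      rw [Nat.add_comm 1 n] at h
      rw [h, Function.iterate_one] at ha
      exact ha
    obtain ⟨x', hx'0, hx'z, hdig, hdign, hit⟩ := ih z' hz'0 hz'1.le a y ha' hy0 hy1
    set c := dig β z 0 with hc
    have hmul : β * (((c : ℝ) + x') / β) = (c : ℝ) + x' := mul_div_cancel₀ _ (ne_of_gt hβ0)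
    have hfloor : ⌊β * (((c : ℝ) + x') / β)⌋ = (c : ℤ) := by
      rw [hmul, Int.floor_eq_iff]
      have := hx'z.trans hz'1
      constructor <;> push_cast <;> linarith
    have htbx : Tb β (((c : ℝ) + x') / β) = x' := by
      rw [Tb, hfloor, hmul]; push_cast; ring
    have hdshift : ∀ j, dig β (((c : ℝ) + x') / β) (j + 1) = dig β x' j := by
      intro j
      have h := dig_shift β (((c : ℝ) + x') / β) 1 j
      rw [Nat.add_comm 1 j] at h
      rw [h, Function.iterate_one, htbx]
    have hzshift : ∀ j, dig β z (j + 1) = dig β z' j := by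
      intro j
      have h := dig_shift β z 1 j
      rw [Nat.add_comm 1 j] at h
      rw [h, Function.iterate_one]
    refine ⟨((c : ℝ) + x') / β, by positivity, ?_, ?_, ?_, ?_⟩
    · have hfz : ⌊β * z⌋ = (c : ℤ) := floor_eq_dig β z hβ0 hz0 0
      have hbz : β * z = (c : ℝ) + z' := by
        rw [hz', Tb, hfz]; push_cast; ring
      rw [div_lt_iff₀ hβ0, mul_comm z β, hbz]
      linarith
    · intro i hi
      match i with
      | 0 => rw [dig0_floor, hfloor]; simp [hc]
      | Nat.succ j => rw [hdshift j, hzshift j, hdig j (by omega)]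
    · rw [hdshift n]; exact hdign
    · rw [Function.iterate_succ_apply, htbx]; exact hit

lemma mem_cyl_iff (β : ℝ) (w : List ℕ) (x : ℝ) :
    x ∈ cyl β w ↔ (x ∈ Set.Ico (0:ℝ) 1 ∧ ∀ i (h : i < w.length), w[i] = dig β x i) :=
  Iff.rfl

lemma iter_mem_Ico (β x : ℝ) (hx : x ∈ Set.Ico (0:ℝ) 1) (k : ℕ) :
    (Tb β)^[k] x ∈ Set.Ico (0:ℝ) 1 :=
  ⟨iter_nonneg β x hx.1 k, iter_lt_one β x hx.2 k⟩

lemma full_cat (β : ℝ) (u v : List ℕ) (hu : Full β u) :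
    (Tb β)^[u.length] '' cyl β (u ++ v) = cyl β v := by
  apply Set.Subset.antisymm
  · rintro _ ⟨x, hx, rfl⟩
    obtain ⟨hx01, hxd⟩ := hx
    refine ⟨iter_mem_Ico β x hx01 u.length, ?_⟩
    intro i hi
    have hlen : u.length + i < (u ++ v).length := by
      simp [List.length_append]; omega
    have h1 := hxd (u.length + i) hlen
    have h2 : (u ++ v)[u.length + i]'hlen = v[i] := by
      rw [List.getElem_append_right (by omega)]
      congr 1; omega
    rw [h2] at h1
    rw [h1, dig_shift]
  · intro y hy
    obtain ⟨hy01, hyd⟩ := hy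
    have : y ∈ (Tb β)^[u.length] '' cyl β u := by rw [hu]; exact hy01
    obtain ⟨x, hx, hxy⟩ := this
    refine ⟨x, ⟨hx.1, ?_⟩, hxy⟩
    intro i hi
    rcases lt_or_ge i u.length with h | h
    · rw [List.getElem_append_left h]
      exact hx.2 i h
    · rw [List.getElem_append_right h]
      have hilen : i - u.length < v.length := by
        have := hi; simp [List.length_append] at this; omega
      have := hyd (i - u.length) hilen
      rw [this, ← hxy, ← dig_shift]
      congr 1; omega


/-- structural criterion of fullness — with canonical suffix
w* = ε₁⋯ε_{l−1}wₙ (wₙ ≤ ε_l), w is full iff w* is full iff wₙ < ε_l. -/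
theorem stmt10 (β : ℝ) (hβ : 1 < β) (w u ws : List ℕ) (l a : ℕ) (hl : 1 ≤ l)
    (hws : ws = List.ofFn (fun i : Fin (l-1) => dig β 1 i) ++ [a])
    (ha : a ≤ dig β 1 (l-1))
    (hdec : w = u ++ ws) (hu : Full β u) (h : Adm β w) :
    (Full β w ↔ Full β ws) ∧ (Full β w ↔ a < dig β 1 (l-1)) := by
  have hβ0 : (0:ℝ) < β := lt_trans one_pos hβ
  have hwsl : ws.length = l := by
    rw [hws]; simp [Nat.sub_add_cancel hl]
  -- ws entries
  have hws_get : ∀ i (hi : i < ws.length), i < l - 1 → ws[i] = dig β 1 i := by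
    intro i hi hil
    rw [List.getElem_of_eq hws hi]
    rw [List.getElem_append_left (by simpa using hil)]
    simp
  have hws_last : ∀ (hi : l - 1 < ws.length), ws[l-1] = a := by
    intro hi
    rw [List.getElem_of_eq hws hi]
    rw [List.getElem_append_right (by simp)]
    simp
  -- Full w ↔ Full ws
  have hiff1 : Full β w ↔ Full β ws := by
    unfold Full
    have hwl : w.length = ws.length + u.length := by
      rw [hdec]; simp [List.length_append]; omega
    rw [hwl, Function.iterate_add, Set.image_comp]
    rw [hdec, full_cat β u ws hu]
  refine ⟨hiff1, hiff1.trans ?_⟩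
  constructor
  · -- Full ws → a < dig β 1 (l-1)
    intro hfull
    by_contra hna
    have hae : a = dig β 1 (l-1) := le_antisymm ha (by omega)
    set r := (Tb β)^[l] 1 with hr
    have hr01 : r ∈ Set.Ico (0:ℝ) 1 := by
      obtain ⟨m, hm⟩ := Nat.exists_eq_add_of_le hl
      rw [hr, show l = m + 1 by omega, Function.iterate_succ_apply']
      exact ⟨tb_nonneg β _, tb_lt_one β _⟩
    have : r ∈ (Tb β)^[ws.length] '' cyl β ws := by rw [hfull]; exact hr01
    obtain ⟨x, hx, hxr⟩ := this
    have hdigs : ∀ i, i < l → dig β x i = dig β 1 i := by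
      intro i hi
      rcases lt_or_ge i (l-1) with h' | h'
      · rw [← hws_get i (by omega) h']
        exact (hx.2 i (by omega)).symm
      · have : i = l - 1 := by omega
        subst this
        rw [← hae, ← hws_last (by omega)]
        exact (hx.2 (l-1) (by omega)).symm
    have hlt := lt_iter β hβ0 l x 1 hx.1.1 zero_le_one hx.1.2 hdigs
    rw [hwsl] at hxr
    rw [hxr] at hlt
    exact lt_irrefl r hlt
  · -- a < dig β 1 (l-1) → Full ws
    intro halt
    have hne : cyl β ws ⊆ Set.Ico (0:ℝ) 1 := fun x hx => hx.1
    apply Set.Subset.antisymm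
    · rintro _ ⟨x, hx, rfl⟩
      exact iter_mem_Ico β x hx.1 ws.length
    · intro y hy
      obtain ⟨x, hx0, hx1, hdigs, hdigl, hit⟩ :=
        exists_pre β hβ (l-1) 1 zero_le_one le_rfl a y halt hy.1 hy.2
      refine ⟨x, ⟨⟨hx0, hx1⟩, ?_⟩, ?_⟩
      · intro i hi
        rcases lt_or_ge i (l-1) with h' | h'
        · rw [hws_get i hi h', hdigs i h']
        · have : i = l - 1 := by rw [hwsl] at hi; omega
          subst this
          rw [hws_last hi, hdigl]
      · rw [hwsl, show l = (l-1) + 1 by omega]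
        exact hit
end
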